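/- Let D be a self-adjoint operator on H and a ∈ B(H) weakly D-differentiable. Then for ξ, η ∈ dom(D) the function g(t) := ⟨(α_t(a) − a) ξ, η⟩ is differentiable at every t ∈ ℝ with g'(t) = i⟨wD(a) e^{-itD} ξ, e^{-itD} η⟩, and consequently |⟨(α_t(a) − a)ξ, η⟩| ≤ |t| ‖wD(a)‖ ‖ξ‖ ‖η‖. -/
import Mathlib


open Complex Filter Topology MeasureTheory
open scoped Topology

local notation "⟪" x ", " y "⟫" => @inner ℂ _ _ x y

variable {H : Type*} [NormedAddCommGroup H] [InnerProductSpace ℂ H] [CompleteSpace H]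

/-- `b` is the bounded operator implementing the commutator form
`(ξ, η) ↦ ⟨aξ, Dη⟩ − ⟨aDξ, η⟩` on `dom D × dom D`; i.e. `a` is weakly `D`-differentiable
with derivative `wD(a) = b`. -/
def IsWeakDeriv (D : H →ₗ.[ℂ] H) (a b : H →L[ℂ] H) : Prop :=
  ∀ ξ η : D.domain, ⟪b (ξ : H), (η : H)⟫ = ⟪a (ξ : H), D η⟫ - ⟪a (D ξ), (η : H)⟫

/-- `conjAd U t a = U t ∘ a ∘ U (−t)`, i.e. `α_t(a) = e^{itD} a e^{-itD}`. -/
noncomputable def conjAd (U : ℝ → H →L[ℂ] H) (t : ℝ) (a : H →L[ℂ] H) : H →L[ℂ] H :=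
  (U t).comp (a.comp (U (-t)))

/-- `U` is the strongly continuous one-parameter unitary group `t ↦ e^{itD}`
generated by the self-adjoint operator `D` (Stone's theorem characterization). -/
structure IsStoneGroupOf (D : H →ₗ.[ℂ] H) (U : ℝ → H →L[ℂ] H) : Prop where
  map_zero : U 0 = 1
  map_add : ∀ s t : ℝ, U (s + t) = (U s).comp (U t)
  isometry : ∀ (t : ℝ) (ξ : H), ‖U t ξ‖ = ‖ξ‖
  hasDerivAt : ∀ ξ : D.domain, HasDerivAt (fun t : ℝ => U t (ξ : H)) (Complex.I • D ξ) 0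
  mem_domain : ∀ ξ v : H, HasDerivAt (fun t : ℝ => U t ξ) v 0 → ξ ∈ D.domain

set_option linter.unusedSectionVars false

section aux
variable {D : H →ₗ.[ℂ] H} {U : ℝ → H →L[ℂ] H} (hU : IsStoneGroupOf D U)
include hU

lemma U_cancel (t : ℝ) (x : H) : U t (U (-t) x) = x := by
  have h := hU.map_add t (-t)
  rw [add_neg_cancel, hU.map_zero] at h
  have := congrArg (fun L : H →L[ℂ] H => L x) h
  simpa using this.symm

lemma U_inner (t : ℝ) (x y : H) : ⟪U t x, U t y⟫ = ⟪x, y⟫ := by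
  let li : H →ₗᵢ[ℂ] H := ⟨(U t).toLinearMap, hU.isometry t⟩
  exact li.inner_map_map x y

lemma hasDerivAt_U (ξ : D.domain) (t : ℝ) :
    HasDerivAt (fun s : ℝ => U s (ξ : H)) (Complex.I • U t (D ξ)) t := by
  have h0' : HasDerivAt (fun r : ℝ => U r (ξ : H)) (Complex.I • D ξ) (t - t) := by
    simpa using hU.hasDerivAt ξ
  have h1 : HasDerivAt (fun s : ℝ => U (s - t) (ξ : H)) (Complex.I • D ξ) t :=
    h0'.comp_sub_const t t
  have h2 : HasDerivAt (fun s : ℝ => U t (U (s - t) (ξ : H)))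
      (U t (Complex.I • D ξ)) t :=
    ((U t).restrictScalars ℝ).hasFDerivAt.comp_hasDerivAt t h1
  have hfun : (fun s : ℝ => U t (U (s - t) (ξ : H))) = fun s : ℝ => U s (ξ : H) := by
    funext s
    have h := congrArg (fun L : H →L[ℂ] H => L (ξ : H)) (hU.map_add t (s - t))
    simp only [ContinuousLinearMap.comp_apply] at h
    rw [← h]
    norm_num
  rw [hfun] at h2
  simpa using h2

lemma hasDerivAt_U_zero (ξ : D.domain) (s : ℝ) :
    HasDerivAt (fun r : ℝ => U r (U s (ξ : H))) (Complex.I • U s (D ξ)) 0 := by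
  have h0' : HasDerivAt (fun r : ℝ => U r (ξ : H)) (Complex.I • U s (D ξ)) (0 + s) := by
    simpa using hasDerivAt_U hU ξ s
  have h1 : HasDerivAt (fun r : ℝ => U (r + s) (ξ : H)) (Complex.I • U s (D ξ)) 0 :=
    h0'.comp_add_const 0 s
  have hfun : (fun r : ℝ => U (r + s) (ξ : H)) = fun r : ℝ => U r (U s (ξ : H)) := by
    funext r
    have h := congrArg (fun L : H →L[ℂ] H => L (ξ : H)) (hU.map_add r s)
    simpa using h
  rwa [hfun] at h1

lemma U_domain (ξ : D.domain) (s : ℝ) :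
    ∃ ζ : D.domain, (ζ : H) = U s (ξ : H) ∧ D ζ = U s (D ξ) := by
  have hd := hasDerivAt_U_zero hU ξ s
  refine ⟨⟨U s (ξ : H), hU.mem_domain _ _ hd⟩, rfl, ?_⟩
  have h2 := hU.hasDerivAt ⟨U s (ξ : H), hU.mem_domain _ _ hd⟩
  have h3 : Complex.I • U s (D ξ)
      = Complex.I • D ⟨U s (ξ : H), hU.mem_domain _ _ hd⟩ := hd.unique h2
  exact (smul_right_injective H Complex.I_ne_zero h3).symm

end aux

/-- For `a` weakly `D`-differentiable and `ξ, η ∈ dom D`, the function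
`g(t) = ⟨(α_t(a) − a) ξ, η⟩` is differentiable everywhere with
`g'(t) = i ⟨wD(a) e^{-itD} ξ, e^{-itD} η⟩`, whence
`|⟨(α_t(a) − a) ξ, η⟩| ≤ |t| ‖wD(a)‖ ‖ξ‖ ‖η‖`. -/

theorem matrix_coefficient_deriv_and_bound
    (D : H →ₗ.[ℂ] H) (hD : IsSelfAdjoint D)
    (U : ℝ → H →L[ℂ] H) (hU : IsStoneGroupOf D U)
    (a b : H →L[ℂ] H) (hw : IsWeakDeriv D a b) (ξ η : D.domain) :
    (∀ t : ℝ, HasDerivAt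
        (fun s : ℝ => ⟪(η : H), (conjAd U s a) (ξ : H) - a (ξ : H)⟫)
        (Complex.I * ⟪U (-t) (η : H), b (U (-t) (ξ : H))⟫) t) ∧
    ∀ t : ℝ, ‖(⟪(η : H), (conjAd U t a) (ξ : H) - a (ξ : H)⟫ : ℂ)‖ ≤
      |t| * ‖b‖ * ‖(ξ : H)‖ * ‖(η : H)‖ := by
  have hderiv : ∀ t : ℝ, HasDerivAt
      (fun s : ℝ => ⟪(η : H), (conjAd U s a) (ξ : H) - a (ξ : H)⟫)
      (Complex.I * ⟪U (-t) (η : H), b (U (-t) (ξ : H))⟫) t := by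
    intro t
    -- derivative of s ↦ U (-s) η
    have hUneg : ∀ ζ : D.domain, HasDerivAt (fun s : ℝ => U (-s) (ζ : H))
        (-(Complex.I • U (-t) (D ζ))) t := by
      intro ζ
      have h0 : HasDerivAt (fun r : ℝ => U r (ζ : H))
          (Complex.I • U (0 - t) (D ζ)) (0 - t) := by
        simpa using hasDerivAt_U hU ζ (-t)
      have h1 := h0.comp_const_sub 0 t
      simp only [zero_sub] at h1
      exact h1
    have hη := hUneg η
    have hξa : HasDerivAt (fun s : ℝ => a (U (-s) (ξ : H)))
        (a (-(Complex.I • U (-t) (D ξ)))) t :=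
      ((a.restrictScalars ℝ).hasFDerivAt).comp_hasDerivAt t (hUneg ξ)
    have hinner := (HasDerivAt.inner ℂ hη hξa).sub_const ⟪(η : H), a (ξ : H)⟫
    have hfun : (fun s : ℝ => ⟪(η : H), (conjAd U s a) (ξ : H) - a (ξ : H)⟫)
        = fun s : ℝ => ⟪U (-s) (η : H), a (U (-s) (ξ : H))⟫ - ⟪(η : H), a (ξ : H)⟫ := by
      funext s
      rw [inner_sub_right]
      congr 1
      have hc : conjAd U s a (ξ : H) = U s (a (U (-s) (ξ : H))) := rfl
      rw [hc, ← U_inner hU s (U (-s) (η : H)) (a (U (-s) (ξ : H))), U_cancel hU s]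
    have hval : (⟪U (-t) (η : H), a (-(Complex.I • U (-t) (D ξ)))⟫
          + ⟪-(Complex.I • U (-t) (D η)), a (U (-t) (ξ : H))⟫ : ℂ)
        = Complex.I * ⟪U (-t) (η : H), b (U (-t) (ξ : H))⟫ := by
      obtain ⟨ζ, hζ1, hζ2⟩ := U_domain hU ξ (-t)
      obtain ⟨θ, hθ1, hθ2⟩ := U_domain hU η (-t)
      have hbw := hw ζ θ
      rw [hζ1, hθ1, hζ2, hθ2] at hbw
      have hconj : (⟪U (-t) (η : H), b (U (-t) (ξ : H))⟫ : ℂ)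
          = ⟪U (-t) (D η), a (U (-t) (ξ : H))⟫ - ⟪U (-t) (η : H), a (U (-t) (D ξ))⟫ := by
        have h := congrArg (starRingEnd ℂ) hbw
        simpa [inner_conj_symm] using h
      simp only [map_neg, _root_.map_smul, ContinuousLinearMap.map_smul, inner_neg_left,
        inner_neg_right, inner_smul_left, inner_smul_right, Complex.conj_I, hconj]
      ring
    rw [hfun]
    rw [← hval]
    exact hinner
  refine ⟨hderiv, fun t => ?_⟩
  have hbound : ∀ s : ℝ,
      ‖(Complex.I * ⟪U (-s) (η : H), b (U (-s) (ξ : H))⟫ : ℂ)‖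
        ≤ ‖b‖ * ‖(ξ : H)‖ * ‖(η : H)‖ := by
    intro s
    rw [norm_mul, Complex.norm_I, one_mul]
    calc ‖(⟪U (-s) (η : H), b (U (-s) (ξ : H))⟫ : ℂ)‖
        ≤ ‖U (-s) (η : H)‖ * ‖b (U (-s) (ξ : H))‖ := norm_inner_le_norm _ _
      _ ≤ ‖(η : H)‖ * (‖b‖ * ‖U (-s) (ξ : H)‖) := by
          rw [hU.isometry]
          exact mul_le_mul_of_nonneg_left (b.le_opNorm _) (norm_nonneg _)
      _ = ‖b‖ * ‖(ξ : H)‖ * ‖(η : H)‖ := by rw [hU.isometry]; ring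
  have h0 : (⟪(η : H), (conjAd U 0 a) (ξ : H) - a (ξ : H)⟫ : ℂ) = 0 := by
    simp [conjAd, hU.map_zero]
  have hmvt := convex_univ.norm_image_sub_le_of_norm_hasDerivWithin_le
    (f := fun s : ℝ => (⟪(η : H), (conjAd U s a) (ξ : H) - a (ξ : H)⟫ : ℂ))
    (f' := fun s : ℝ => Complex.I * ⟪U (-s) (η : H), b (U (-s) (ξ : H))⟫)
    (C := ‖b‖ * ‖(ξ : H)‖ * ‖(η : H)‖)
    (fun x _ => (hderiv x).hasDerivWithinAt) (fun x _ => hbound x)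
    (Set.mem_univ 0) (Set.mem_univ t)
  simp only [h0, sub_zero, Real.norm_eq_abs] at hmvt
  calc ‖(⟪(η : H), (conjAd U t a) (ξ : H) - a (ξ : H)⟫ : ℂ)‖
      ≤ ‖b‖ * ‖(ξ : H)‖ * ‖(η : H)‖ * |t| := hmvt
    _ = |t| * ‖b‖ * ‖(ξ : H)‖ * ‖(η : H)‖ := by ring
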